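/- The function h_D(x1,x2) := 2 h_b((x1+x2)/2) - h_b(x1) - h_b(x2) is jointly convex on [0,1]×[0,1]; in particular, it is convex in x1 for each fixed x2 and convex in x2 for each fixed x1. -/

import Mathlib

/-- Binary entropy function (base 2), with the convention `0 log 0 = 0`. -/
noncomputable def hb (x : ℝ) : ℝ := -(x * Real.logb 2 x) - (1 - x) * Real.logb 2 (1 - x)

/-- The function `h_D`. -/
noncomputable def hD (x1 x2 : ℝ) : ℝ := 2 * hb ((x1 + x2) / 2) - hb x1 - hb x2

/-- The Kullback–Leibler kernel `p ↦ p (log p − log q)`. -/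
noncomputable def phiKL (p q : ℝ) : ℝ := p * (Real.log p - Real.log q)

/-- The two-term log-sum inequality, with Lean's `log 0 = 0` convention,
under the hypotheses `0 ≤ pᵢ ≤ 2 qᵢ`. -/
lemma logsum_aux {p1 q1 p2 q2 : ℝ} (hp1 : 0 ≤ p1) (h1 : p1 ≤ 2*q1)
    (hp2 : 0 ≤ p2) (h2 : p2 ≤ 2*q2) :
    phiKL (p1+p2) (q1+q2) ≤ phiKL p1 q1 + phiKL p2 q2 := by
  have hq1 : 0 ≤ q1 := by linarith
  have hq2 : 0 ≤ q2 := by linarith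
  rcases eq_or_lt_of_le hp1 with e1 | e1
  · rcases eq_or_lt_of_le hp2 with e2 | e2
    · simp [phiKL, ← e1, ← e2]
    · have hq2' : 0 < q2 := by linarith
      have hlog : Real.log q2 ≤ Real.log (q1+q2) := Real.log_le_log hq2' (by linarith)
      simp only [phiKL, ← e1, zero_add, zero_mul]
      nlinarith
  · rcases eq_or_lt_of_le hp2 with e2 | e2
    · have hq1' : 0 < q1 := by linarith
      have hlog : Real.log q1 ≤ Real.log (q1+q2) := Real.log_le_log hq1' (by linarith)
      simp only [phiKL, ← e2, add_zero, zero_mul]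
      nlinarith
    · have hq1' : 0 < q1 := by linarith
      have hq2' : 0 < q2 := by linarith
      set s := p1 + p2 with hs
      set t := q1 + q2 with ht
      have hsp : 0 < s := by positivity
      have htp : 0 < t := by positivity
      have A1 : (0:ℝ) < s*q1/(t*p1) := by positivity
      have A2 : (0:ℝ) < s*q2/(t*p2) := by positivity
      have L1 : Real.log (s*q1/(t*p1)) ≤ s*q1/(t*p1) - 1 := Real.log_le_sub_one_of_pos A1
      have L2 : Real.log (s*q2/(t*p2)) ≤ s*q2/(t*p2) - 1 := Real.log_le_sub_one_of_pos A2
      have E1 : Real.log (s*q1/(t*p1)) = Real.log s + Real.log q1 - Real.log t - Real.log p1 := by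
        rw [Real.log_div (by positivity) (by positivity), Real.log_mul hsp.ne' hq1'.ne',
          Real.log_mul htp.ne' e1.ne']
        ring
      have E2 : Real.log (s*q2/(t*p2)) = Real.log s + Real.log q2 - Real.log t - Real.log p2 := by
        rw [Real.log_div (by positivity) (by positivity), Real.log_mul hsp.ne' hq2'.ne',
          Real.log_mul htp.ne' e2.ne']
        ring
      have M1 := mul_le_mul_of_nonneg_left (E1 ▸ L1) e1.le
      have M2 := mul_le_mul_of_nonneg_left (E2 ▸ L2) e2.le
      have F1 : p1 * (s*q1/(t*p1) - 1) = s*q1/t - p1 := by field_simp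
      have F2 : p2 * (s*q2/(t*p2) - 1) = s*q2/t - p2 := by field_simp
      have F3 : s*q1/t + s*q2/t = s := by field_simp [ht]; ring
      rw [F1] at M1; rw [F2] at M2
      simp only [phiKL]
      have G : s * (Real.log s - Real.log t)
          = p1*Real.log s - p1*Real.log t + p2*Real.log s - p2*Real.log t := by
        rw [hs]; ring
      linarith [M1, M2, F3, G]

lemma phiKL_smul {a p q : ℝ} (ha : 0 ≤ a) (hp : 0 ≤ p) (h : p ≤ 2*q) :
    a * phiKL p q = phiKL (a*p) (a*q) := by
  rcases eq_or_lt_of_le ha with e | e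
  · simp [phiKL, ← e]
  rcases eq_or_lt_of_le hp with e' | e'
  · simp [phiKL, ← e']
  have hq : 0 < q := by linarith
  simp only [phiKL, Real.log_mul e.ne' e'.ne', Real.log_mul e.ne' hq.ne']
  ring

lemma phiKL_step {a b u v mu mv : ℝ} (ha : 0 ≤ a) (hb : 0 ≤ b) (hu : 0 ≤ u) (hv : 0 ≤ v)
    (h1 : u ≤ 2*mu) (h2 : v ≤ 2*mv) :
    phiKL (a*u + b*v) (a*mu + b*mv) ≤ a * phiKL u mu + b * phiKL v mv := by
  rw [phiKL_smul ha hu h1, phiKL_smul hb hv h2]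
  exact logsum_aux (mul_nonneg ha hu) (by nlinarith) (mul_nonneg hb hv) (by nlinarith)

/-- Sum of the four KL-kernel terms; equals `(log 2) * hD`. -/
noncomputable def jointG (p : ℝ × ℝ) : ℝ :=
  phiKL p.1 ((p.1+p.2)/2) + phiKL p.2 ((p.1+p.2)/2)
  + phiKL (1-p.1) (1-(p.1+p.2)/2) + phiKL (1-p.2) (1-(p.1+p.2)/2)

lemma hD_eq (x1 x2 : ℝ) : hD x1 x2 = (Real.log 2)⁻¹ * jointG (x1, x2) := by
  have h2 : Real.log 2 ≠ 0 := (Real.log_pos one_lt_two).ne'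
  have e : (1:ℝ) - (x1 + x2)/2 = ((1-x1) + (1-x2))/2 := by ring
  simp only [hD, hb, jointG, phiKL, Real.logb, e]
  field_simp
  ring

lemma jointG_convex :
    ConvexOn ℝ (Set.Icc (0:ℝ) 1 ×ˢ Set.Icc (0:ℝ) 1) jointG := by
  refine ⟨(convex_Icc 0 1).prod (convex_Icc 0 1), ?_⟩
  rintro ⟨x1, x2⟩ ⟨hx1, hx2⟩ ⟨y1, y2⟩ ⟨hy1, hy2⟩ a b ha hb hab
  obtain ⟨hx10, hx11⟩ := hx1; obtain ⟨hx20, hx21⟩ := hx2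
  obtain ⟨hy10, hy11⟩ := hy1; obtain ⟨hy20, hy21⟩ := hy2
  dsimp only at hx10 hx11 hx20 hx21 hy10 hy11 hy20 hy21
  simp only [Prod.smul_mk, Prod.mk_add_mk, smul_eq_mul, jointG]
  have e0 : (a*x1 + b*y1 + (a*x2 + b*y2))/2 = a*((x1+x2)/2) + b*((y1+y2)/2) := by ring
  have e1 : 1 - (a*x1 + b*y1) = a*(1-x1) + b*(1-y1) := by linear_combination -hab
  have e2 : 1 - (a*x2 + b*y2) = a*(1-x2) + b*(1-y2) := by linear_combination -hab
  have e3 : 1 - (a*x1 + b*y1 + (a*x2 + b*y2))/2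
      = a*(1-(x1+x2)/2) + b*(1-(y1+y2)/2) := by linear_combination -hab
  rw [e1, e2, e3, e0]
  have t1 := phiKL_step (u := x1) (v := y1) (mu := (x1+x2)/2) (mv := (y1+y2)/2)
    ha hb hx10 hy10 (by linarith) (by linarith)
  have t2 := phiKL_step (u := x2) (v := y2) (mu := (x1+x2)/2) (mv := (y1+y2)/2)
    ha hb hx20 hy20 (by linarith) (by linarith)
  have t3 := phiKL_step ha hb (u := 1-x1) (v := 1-y1) (mu := 1-(x1+x2)/2) (mv := 1-(y1+y2)/2)
    (by linarith) (by linarith) (by linarith) (by linarith)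
  have t4 := phiKL_step ha hb (u := 1-x2) (v := 1-y2) (mu := 1-(x1+x2)/2) (mv := 1-(y1+y2)/2)
    (by linarith) (by linarith) (by linarith) (by linarith)
  have total := add_le_add (add_le_add (add_le_add t1 t2) t3) t4
  refine total.trans_eq ?_
  ring

theorem hD_convex :
    ConvexOn ℝ (Set.Icc (0:ℝ) 1 ×ˢ Set.Icc (0:ℝ) 1) (fun p : ℝ × ℝ => hD p.1 p.2) ∧
    (∀ x2 ∈ Set.Icc (0:ℝ) 1, ConvexOn ℝ (Set.Icc (0:ℝ) 1) (fun x1 => hD x1 x2)) ∧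
    (∀ x1 ∈ Set.Icc (0:ℝ) 1, ConvexOn ℝ (Set.Icc (0:ℝ) 1) (fun x2 => hD x1 x2)) := by
  have hc : (0:ℝ) ≤ (Real.log 2)⁻¹ := by positivity
  have joint : ConvexOn ℝ (Set.Icc (0:ℝ) 1 ×ˢ Set.Icc (0:ℝ) 1)
      (fun p : ℝ × ℝ => hD p.1 p.2) := by
    have := jointG_convex.smul hc
    convert this using 2 with p
    case e'_12 => simp [hD_eq, smul_eq_mul]
    all_goals rfl
  refine ⟨joint, ?_, ?_⟩
  · intro x2 hx2
    refine ⟨convex_Icc 0 1, fun u hu v hv a b ha hb hab => ?_⟩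
    have := joint.2 (x := (u, x2)) ⟨hu, hx2⟩ (y := (v, x2)) ⟨hv, hx2⟩ ha hb hab
    have e : a • ((u:ℝ), (x2:ℝ)) + b • (v, x2) = (a*u + b*v, a*x2 + b*x2) := rfl
    rw [e, show a*x2 + b*x2 = x2 by linear_combination x2 * hab] at this
    simpa using this
  · intro x1 hx1
    refine ⟨convex_Icc 0 1, fun u hu v hv a b ha hb hab => ?_⟩
    have := joint.2 (x := (x1, u)) ⟨hx1, hu⟩ (y := (x1, v)) ⟨hx1, hv⟩ ha hb hab
    have e : a • ((x1:ℝ), (u:ℝ)) + b • (x1, v) = (a*x1 + b*x1, a*u + b*v) := rfl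
    rw [e, show a*x1 + b*x1 = x1 by linear_combination x1 * hab] at this
    simpa using this
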